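/- Let B be any 2×2 complex matrix. If for every k ∈ ℝ³ the matrix W(k) + B is unitary, where W(k) = Σ_{i=1}^{4} (exp(i (hᵢ·k)) • Aᵢ + exp(−i (hᵢ·k)) • Bᵢ) is the Weyl walk symbol, then B = 0. (The three-dimensional Weyl walk admits no self-interaction term.) -/

import Mathlib

open Matrix Complex

/-- `η⁺ = (1+i)/4`. -/
noncomputable def etaP : ℂ := (1 + Complex.I) / 4
/-- `η⁻ = (1−i)/4`. -/
noncomputable def etaM : ℂ := (1 - Complex.I) / 4

/-- Transition matrices `A₁, A₂, A₃, A₄` of the Weyl walk. -/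
noncomputable def WeylA : Fin 4 → Matrix (Fin 2) (Fin 2) ℂ :=
  ![!![etaP, 0; etaP, 0], !![0, etaP; 0, etaP],
    !![0, -etaP; 0, etaP], !![etaP, 0; -etaP, 0]]

/-- Transition matrices `B₁, B₂, B₃, B₄` of the Weyl walk. -/
noncomputable def WeylB : Fin 4 → Matrix (Fin 2) (Fin 2) ℂ :=
  ![!![0, -etaM; 0, etaM], !![etaM, 0; -etaM, 0],
    !![etaM, 0; etaM, 0], !![0, etaM; 0, etaM]]

/-- BCC generators `h₁ = (1,1,1)`, `h₂ = (1,−1,−1)`, `h₃ = (−1,1,−1)`, `h₄ = (−1,−1,1)`. -/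
def bccH : Fin 4 → Fin 3 → ℝ :=
  ![![1, 1, 1], ![1, -1, -1], ![-1, 1, -1], ![-1, -1, 1]]

/-- The Weyl walk symbol `W(k) = Σᵢ (e^{i hᵢ·k} Aᵢ + e^{−i hᵢ·k} Bᵢ)`. -/
noncomputable def WeylSymbol (k : Fin 3 → ℝ) : Matrix (Fin 2) (Fin 2) ℂ :=
  ∑ i : Fin 4,
    (Complex.exp (Complex.I * ((bccH i ⬝ᵥ k : ℝ) : ℂ)) • WeylA i
      + Complex.exp (-(Complex.I * ((bccH i ⬝ᵥ k : ℝ) : ℂ))) • WeylB i)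

/-- The three-dimensional Weyl walk admits no self-interaction term: if `W(k) + B` is
unitary for every `k ∈ ℝ³`, then `B = 0`. -/
lemma weyl_zero : WeylSymbol 0 = 1 := by
  ext i j
  simp [WeylSymbol, Fin.sum_univ_four, WeylA, WeylB, bccH, dotProduct,
    Fin.sum_univ_three, Matrix.one_apply, etaP, etaM]
  fin_cases i <;> fin_cases j <;> simp <;> ring

lemma weyl_pi : WeylSymbol ![Real.pi, 0, 0] = -1 := by
  have h1 : Complex.exp (Complex.I * (Real.pi : ℂ)) = -1 := by
    rw [mul_comm]; exact Complex.exp_pi_mul_I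
  have h2 : Complex.exp (-(Complex.I * (Real.pi : ℂ))) = -1 := by
    rw [Complex.exp_neg, mul_comm, Complex.exp_pi_mul_I]; norm_num
  have h3 : Complex.exp (Complex.I * ((-Real.pi : ℝ) : ℂ)) = -1 := by
    push_cast; rw [mul_neg, h2]
  have h4 : Complex.exp (-(Complex.I * ((-Real.pi : ℝ) : ℂ))) = -1 := by
    push_cast; rw [mul_neg, neg_neg, h1]
  have d0 : bccH 0 ⬝ᵥ ![Real.pi, 0, 0] = Real.pi := by
    simp [bccH, dotProduct, Fin.sum_univ_three]
  have d1 : bccH 1 ⬝ᵥ ![Real.pi, 0, 0] = Real.pi := by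
    simp [bccH, dotProduct, Fin.sum_univ_three]
  have d2 : bccH 2 ⬝ᵥ ![Real.pi, 0, 0] = -Real.pi := by
    simp [bccH, dotProduct, Fin.sum_univ_three]
  have d3 : bccH 3 ⬝ᵥ ![Real.pi, 0, 0] = -Real.pi := by
    simp [bccH, dotProduct, Fin.sum_univ_three]
  ext i j
  simp only [WeylSymbol, Fin.sum_univ_four, d0, d1, d2, d3, h1, h2, h3, h4]
  fin_cases i <;> fin_cases j <;>
    simp [WeylA, WeylB, etaP, etaM, Matrix.one_apply] <;> ring

theorem weyl_no_self_interaction (B : Matrix (Fin 2) (Fin 2) ℂ)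
    (hU : ∀ k : Fin 3 → ℝ, WeylSymbol k + B ∈ Matrix.unitaryGroup (Fin 2) ℂ) :
    B = 0 := by
  have e1 : star ((1 : Matrix (Fin 2) (Fin 2) ℂ) + B) * (1 + B) = 1 := by
    have := (hU 0).1; rwa [weyl_zero] at this
  have e2 : star ((-1 : Matrix (Fin 2) (Fin 2) ℂ) + B) * (-1 + B) = 1 := by
    have := (hU ![Real.pi, 0, 0]).1; rwa [weyl_pi] at this
  have f1 : star B + B + star B * B
      = star ((1 : Matrix (Fin 2) (Fin 2) ℂ) + B) * (1 + B) - 1 := by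
    rw [star_add, star_one]; noncomm_ring
  have f2 : -(star B) - B + star B * B
      = star ((-1 : Matrix (Fin 2) (Fin 2) ℂ) + B) * (-1 + B) - 1 := by
    rw [star_add, star_neg, star_one]; noncomm_ring
  rw [e1, sub_self] at f1
  rw [e2, sub_self] at f2
  have hS : star B * B + star B * B = 0 := by
    have h := congrArg₂ (· + ·) f1 f2
    simp only [add_zero] at h
    rw [← h]; abel
  have hS0 : Bᴴ * B = 0 := by
    ext i j
    have h := Matrix.ext_iff.mpr hS i j
    rw [Matrix.add_apply] at h
    rw [← Matrix.star_eq_conjTranspose]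
    simpa using add_self_eq_zero.mp h
  open ComplexOrder in
  exact Matrix.conjTranspose_mul_self_eq_zero.mp hS0
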